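/- Let ε₁ > 0, let K ⊂ ℂ be compact, and let T be a closed square with sides parallel to the coordinate axes, center c_T and side length d_T, such that γ(Int(T) ∖ K) ≥ ε₁·d_T. Then for any α, β ∈ ℂ with |α| ≤ 1 and |β| ≤ 1 there exists a continuous function f : ℂ → ℂ such that: (1) sup_{z∈ℂ} |f(z)| ≤ 54/ε₁³; (2) f is analytic on ℂ ∖ E for some compact set E ⊂ Int(T) ∖ K; (3) f(z) → 0 as z → ∞; (4) lim_{z→∞} z·f(z) = α·d_T; (5) lim_{z→∞} (z − c_T)·((z − c_T)·f(z) − α·d_T) = β·d_T². -/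

import Mathlib

open MeasureTheory Metric Filter Polynomial

noncomputable section

/-- The analytic capacity of a set `E ⊆ ℂ`: the supremum, over compact subsets `F ⊆ E` and
admissible functions `f` (analytic off `F`, bounded by `1`, vanishing at `∞`, with
`lim_{z→∞} z·f(z)` existing), of `|lim_{z→∞} z·f(z)|`. -/
def analyticCapacity (E : Set ℂ) : ℝ :=
  sSup {r : ℝ | ∃ (F : Set ℂ) (f : ℂ → ℂ) (c : ℂ),
    F ⊆ E ∧ IsCompact F ∧ DifferentiableOn ℂ f Fᶜ ∧
    (∀ z ∉ F, ‖(f z)‖ ≤ 1) ∧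
    Tendsto f (cocompact ℂ) (nhds 0) ∧
    Tendsto (fun z => z * f z) (cocompact ℂ) (nhds c) ∧
    r = ‖c‖}


/-- The closed square with center `c`, sides parallel to the coordinate axes,
and side length `d`. -/
def closedSquare (c : ℂ) (d : ℝ) : Set ℂ :=
  {z : ℂ | |z.re - c.re| ≤ d / 2 ∧ |z.im - c.im| ≤ d / 2}

namespace Stmt12Aux

lemma le_of_forall_pos_le_add' {x y : ℝ} (h : ∀ ε : ℝ, 0 < ε → x ≤ y + ε) : x ≤ y := by
  by_contra h'
  push_neg at h'
  have := h ((x - y) / 2) (by linarith)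
  linarith

lemma tendsto_sub_const_cobounded (c : ℂ) :
    Tendsto (fun z : ℂ => z - c) (Bornology.cobounded ℂ) (Bornology.cobounded ℂ) := by
  rw [← tendsto_norm_atTop_iff_cobounded]
  refine tendsto_atTop_mono (fun z => norm_sub_norm_le z c) ?_
  exact tendsto_atTop_add_const_right _ (-‖c‖) tendsto_norm_cobounded_atTop

lemma tendsto_const_add_cobounded (c : ℂ) :
    Tendsto (fun z : ℂ => c + z) (Bornology.cobounded ℂ) (Bornology.cobounded ℂ) := by
  refine (tendsto_sub_const_cobounded (-c)).congr fun z => by ring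

end Stmt12Aux

open Stmt12Aux in
set_option maxHeartbeats 1000000 in
theorem stmt12 (ε₁ : ℝ) (hε₁ : 0 < ε₁) (K : Set ℂ) (hK : IsCompact K)
    (c : ℂ) (d : ℝ) (hd : 0 < d)
    (hcap : ε₁ * d ≤ analyticCapacity (interior (closedSquare c d) \ K))
    (α β : ℂ) (hα : ‖α‖ ≤ 1) (hβ : ‖β‖ ≤ 1) :
    ∃ f : ℂ → ℂ, Continuous f ∧
      (∀ z : ℂ, ‖(f z)‖ ≤ 54 / ε₁ ^ 3) ∧
      (∃ E : Set ℂ, IsCompact E ∧ E ⊆ interior (closedSquare c d) \ K ∧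
        DifferentiableOn ℂ f Eᶜ) ∧
      Tendsto f (cocompact ℂ) (nhds 0) ∧
      Tendsto (fun z => z * f z) (cocompact ℂ) (nhds (α * (d : ℂ))) ∧
      Tendsto (fun z => (z - c) * ((z - c) * f z - α * (d : ℂ)))
        (cocompact ℂ) (nhds (β * (d : ℂ) ^ 2)) := by
  classical
  set U : Set ℂ := interior (closedSquare c d) \ K with hU
  have hUopen : IsOpen U := isOpen_interior.sdiff hK.isClosed
  have hpos : 0 < ε₁ * d := mul_pos hε₁ hd
  -- extract an admissible triple with large coefficient
  set S : Set ℝ := {r : ℝ | ∃ (F : Set ℂ) (f : ℂ → ℂ) (a : ℂ),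
    F ⊆ U ∧ IsCompact F ∧ DifferentiableOn ℂ f Fᶜ ∧
    (∀ z ∉ F, ‖(f z)‖ ≤ 1) ∧
    Tendsto f (cocompact ℂ) (nhds 0) ∧
    Tendsto (fun z => z * f z) (cocompact ℂ) (nhds a) ∧
    r = ‖a‖} with hS
  have hcap' : ε₁ * d ≤ sSup S := hcap
  have hSne : S.Nonempty := by
    by_contra h
    rw [Set.not_nonempty_iff_eq_empty] at h
    rw [h, Real.sSup_empty] at hcap'
    linarith
  obtain ⟨r, hrS, hr⟩ : ∃ r ∈ S, ε₁ * d / 2 < r :=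
    exists_lt_of_lt_csSup hSne (by linarith)
  obtain ⟨F, g, a, hFU, hFc, hgd, hgb, hg0, hga, rfl⟩ := hrS
  have hFopen : IsOpen Fᶜ := hFc.isClosed.isOpen_compl
  have ha0 : 0 < ‖a‖ := lt_of_le_of_lt (by positivity) hr
  have haa : a ≠ 0 := by
    intro h; rw [h] at ha0; simp at ha0
  -- F is nonempty
  have hFne : F.Nonempty := by
    by_contra h
    rw [Set.not_nonempty_iff_eq_empty] at h
    subst h
    have hgdiff : Differentiable ℂ g := by
      rw [← differentiableOn_univ]
      simpa using hgd
    have hbdd : Bornology.IsBounded (Set.range g) := by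
      rw [Metric.isBounded_iff_subset_closedBall 0]
      refine ⟨1, ?_⟩
      rintro x ⟨z, rfl⟩
      simpa  using hgb z (by simp)
    obtain ⟨C, hC⟩ := hgdiff.exists_const_forall_eq_of_bounded hbdd
    have hC0 : C = 0 := by
      have : Tendsto (fun _ : ℂ => C) (cocompact ℂ) (nhds 0) := by
        refine hg0.congr fun z => hC z
      exact (tendsto_nhds_unique tendsto_const_nhds this)
    have : Tendsto (fun z : ℂ => z * g z) (cocompact ℂ) (nhds 0) := by
      have : (fun z : ℂ => z * g z) = fun _ => 0 := by
        funext z; rw [hC z, hC0, mul_zero]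
      rw [this]; exact tendsto_const_nhds
    have := tendsto_nhds_unique hga this
    rw [this] at ha0; simp at ha0
  -- geometry: F ⊆ closedBall c d
  have hFball : F ⊆ closedBall c d := by
    intro z hz
    have h1 : z ∈ closedSquare c d := interior_subset (hFU hz).1
    obtain ⟨h2, h3⟩ := h1
    rw [mem_closedBall, dist_eq_norm]
    calc ‖(z - c)‖ ≤ |(z - c).re| + |(z - c).im| :=
          Complex.norm_le_abs_re_add_abs_im _
    _ = |z.re - c.re| + |z.im - c.im| := by simp [Complex.sub_re, Complex.sub_im]
    _ ≤ d / 2 + d / 2 := add_le_add h2 h3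
    _ = d := by ring
  set R : ℝ := d⁻¹ with hR
  have hR0 : 0 < R := by positivity
  -- modified Cayley transform
  set G : ℂ → ℂ := fun w => if w = 0 then 0 else g (c + w⁻¹) with hGdef
  have houtside : ∀ w : ℂ, w ≠ 0 → ‖w‖ < R → c + w⁻¹ ∉ F := by
    intro w hw hwR hmem
    have h0 := hFball hmem
    rw [mem_closedBall, dist_eq_norm] at h0
    have h1 : ‖c + w⁻¹ - c‖ = (‖w‖)⁻¹ := by
      simp [norm_inv]
    rw [h1] at h0
    have h2 : d < (‖w‖)⁻¹ := by
      have h3 : R⁻¹ < (‖w‖)⁻¹ := inv_strictAnti₀ (norm_pos_iff.mpr hw) hwR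
      rwa [hR, inv_inv] at h3
    linarith
  have hGpunct : ∀ w : ℂ, w ≠ 0 → ‖w‖ < R → DifferentiableAt ℂ G w := by
    intro w hw hwR
    have hdiff : DifferentiableAt ℂ (fun w : ℂ => g (c + w⁻¹)) w := by
      have h1 : DifferentiableAt ℂ (fun w : ℂ => c + w⁻¹) w :=
        (differentiableAt_const c).add (differentiableAt_inv hw)
      have h2 : DifferentiableAt ℂ g (c + w⁻¹) :=
        hgd.differentiableAt (hFopen.mem_nhds (houtside w hw hwR))
      exact h2.comp w h1
    refine hdiff.congr_of_eventuallyEq ?_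
    filter_upwards [isOpen_ne.mem_nhds (x := w) hw] with x hx
    simp [hGdef, hx]
  have hto_cocompact : Tendsto (fun w : ℂ => c + w⁻¹) (nhdsWithin 0 {0}ᶜ) (cocompact ℂ) := by
    rw [← Metric.cobounded_eq_cocompact]
    exact (Stmt12Aux.tendsto_const_add_cobounded c).comp tendsto_inv₀_nhdsNE_zero
  have hGlim : Tendsto G (nhdsWithin 0 {0}ᶜ) (nhds 0) := by
    refine Tendsto.congr' ?_ (hg0.comp hto_cocompact)
    filter_upwards [self_mem_nhdsWithin] with w hw
    simp only [Set.mem_compl_iff, Set.mem_singleton_iff] at hw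
    simp [hGdef, hw, Function.comp]
  have hGcont0 : ContinuousAt G 0 := by
    have h0 : G 0 = 0 := by simp [hGdef]
    refine continuousWithinAt_compl_self.1 ?_
    show Tendsto G (nhdsWithin 0 {0}ᶜ) (nhds (G 0))
    rw [h0]
    exact hGlim
  have hGanalytic : AnalyticAt ℂ G 0 := by
    refine Complex.analyticAt_of_differentiable_on_punctured_nhds_of_continuousAt ?_ hGcont0
    have hball : Metric.ball (0 : ℂ) R ∈ nhds (0 : ℂ) := Metric.ball_mem_nhds _ hR0
    filter_upwards [mem_nhdsWithin_of_mem_nhds hball, self_mem_nhdsWithin] with w hw hw0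
    simp only [Set.mem_compl_iff, Set.mem_singleton_iff] at hw0
    rw [Metric.mem_ball, dist_zero_right] at hw
    exact hGpunct w hw0 hw
  have hGdiff : DifferentiableOn ℂ G (Metric.ball 0 R) := by
    intro w hw
    rw [Metric.mem_ball, dist_zero_right] at hw
    rcases eq_or_ne w 0 with rfl | hw0
    · exact hGanalytic.differentiableAt.differentiableWithinAt
    · exact (hGpunct w hw0 hw).differentiableWithinAt
  have hGle1 : ∀ w : ℂ, ‖w‖ < R → ‖(G w)‖ ≤ 1 := by
    intro w hw
    rcases eq_or_ne w 0 with rfl | hw0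
    · simp [hGdef]
    · have := hgb _ (houtside w hw0 hw)
      simpa [hGdef, hw0] using this
  have hG0 : G 0 = 0 := by simp [hGdef]
  -- Schwarz-type bound : |G w| ≤ d * |w|
  have hGbound : ∀ w : ℂ, ‖w‖ < R → ‖(G w)‖ ≤ d * ‖w‖ := by
    intro w hw
    rcases eq_or_ne w 0 with rfl | hw0
    · simp [hG0]
    · have hwpos : 0 < ‖w‖ := norm_pos_iff.mpr hw0
      refine le_of_forall_pos_le_add' fun ε hε => ?_
      set ε' : ℝ := ε / (d * ‖w‖) with hε'def
      have hε' : 0 < ε' := by positivity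
      have hmaps : Set.MapsTo G (Metric.ball 0 R) (Metric.ball (G 0) (1 + ε')) := by
        intro x hx
        rw [Metric.mem_ball, dist_zero_right] at hx
        rw [hG0, Metric.mem_ball, dist_zero_right]
        have := hGle1 x (by simpa  using hx)
        linarith
      have := Complex.dist_le_div_mul_dist_of_mapsTo_ball hGdiff (hmaps.mono_right ball_subset_closedBall)
        (z := w) (by simpa [Metric.mem_ball, dist_zero_right] using hw)
      rw [hG0, dist_zero_right, dist_zero_right] at this
      have hRd : (1 + ε') / R = (1 + ε') * d := by
        rw [hR, div_inv_eq_mul]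
      rw [hRd] at this
      calc ‖(G w)‖ ≤ (1 + ε') * d * ‖w‖ := this
      _ = d * ‖w‖ + ε' * (d * ‖w‖) := by ring
      _ = d * ‖w‖ + ε := by
          rw [hε'def, div_mul_cancel₀]
          positivity
  -- the function K₁
  set K₁ : ℂ → ℂ := fun w => if w = 0 then a else G w / w with hK₁def
  have hK₁punct : ∀ w : ℂ, w ≠ 0 → ‖w‖ < R → DifferentiableAt ℂ K₁ w := by
    intro w hw hwR
    have hdiff : DifferentiableAt ℂ (fun w : ℂ => G w / w) w :=
      (hGpunct w hw hwR).div differentiableAt_id hw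
    refine hdiff.congr_of_eventuallyEq ?_
    filter_upwards [isOpen_ne.mem_nhds (x := w) hw] with x hx
    simp [hK₁def, hx]
  have hzgc : Tendsto (fun z : ℂ => (z - c) * g z) (cocompact ℂ) (nhds a) := by
    have h1 : Tendsto (fun z : ℂ => z * g z - c * g z) (cocompact ℂ) (nhds (a - c * 0)) :=
      hga.sub (hg0.const_mul c)
    rw [mul_zero, sub_zero] at h1
    refine h1.congr fun z => by ring
  have hK₁lim : Tendsto K₁ (nhdsWithin 0 {0}ᶜ) (nhds a) := by
    have h1 : Tendsto (fun w : ℂ => ((c + w⁻¹) - c) * g (c + w⁻¹)) (nhdsWithin 0 {0}ᶜ)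
        (nhds a) := hzgc.comp hto_cocompact
    refine Tendsto.congr' ?_ h1
    filter_upwards [self_mem_nhdsWithin] with w hw
    simp only [Set.mem_compl_iff, Set.mem_singleton_iff] at hw
    have : c + w⁻¹ - c = w⁻¹ := by ring
    rw [this]
    simp [hK₁def, hGdef, hw, div_eq_mul_inv, mul_comm]
  have hK₁cont0 : ContinuousAt K₁ 0 := by
    have h0 : K₁ 0 = a := by simp [hK₁def]
    refine continuousWithinAt_compl_self.1 ?_
    show Tendsto K₁ (nhdsWithin 0 {0}ᶜ) (nhds (K₁ 0))
    rw [h0]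
    exact hK₁lim
  have hK₁analytic : AnalyticAt ℂ K₁ 0 := by
    refine Complex.analyticAt_of_differentiable_on_punctured_nhds_of_continuousAt ?_ hK₁cont0
    have hball : Metric.ball (0 : ℂ) R ∈ nhds (0 : ℂ) := Metric.ball_mem_nhds _ hR0
    filter_upwards [mem_nhdsWithin_of_mem_nhds hball, self_mem_nhdsWithin] with w hw hw0
    simp only [Set.mem_compl_iff, Set.mem_singleton_iff] at hw0
    rw [Metric.mem_ball, dist_zero_right] at hw
    exact hK₁punct w hw0 hw
  have hK₁diff : DifferentiableOn ℂ K₁ (Metric.ball 0 R) := by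
    intro w hw
    rw [Metric.mem_ball, dist_zero_right] at hw
    rcases eq_or_ne w 0 with rfl | hw0
    · exact hK₁analytic.differentiableAt.differentiableWithinAt
    · exact (hK₁punct w hw0 hw).differentiableWithinAt
  have hK₁0 : K₁ 0 = a := by simp [hK₁def]
  have hK₁bound : ∀ w : ℂ, ‖w‖ < R → ‖(K₁ w)‖ ≤ d := by
    intro w hw
    rcases eq_or_ne w 0 with rfl | hw0
    · -- |a| ≤ d by taking limits
      rw [hK₁0]
      have hev : ∀ᶠ w in nhdsWithin (0 : ℂ) {0}ᶜ, ‖(K₁ w)‖ ≤ d := by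
        have hball : Metric.ball (0 : ℂ) R ∈ nhds (0 : ℂ) := Metric.ball_mem_nhds _ hR0
        filter_upwards [mem_nhdsWithin_of_mem_nhds hball, self_mem_nhdsWithin] with w hw hw0
        simp only [Set.mem_compl_iff, Set.mem_singleton_iff] at hw0
        rw [Metric.mem_ball, dist_zero_right] at hw
        have hwpos : 0 < ‖w‖ := norm_pos_iff.mpr hw0
        have h1 : ‖(K₁ w)‖ = ‖(G w)‖ / ‖w‖ := by
          simp [hK₁def, hw0, norm_div]
        rw [h1, div_le_iff₀ hwpos, mul_comm]
        rw [mul_comm]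
        exact hGbound w hw
      have htd : Tendsto (fun w => ‖(K₁ w)‖) (nhdsWithin 0 {0}ᶜ)
          (nhds (‖a‖)) := (continuous_norm.continuousAt.tendsto).comp hK₁lim
      exact le_of_tendsto htd hev
    · have hwpos : 0 < ‖w‖ := norm_pos_iff.mpr hw0
      have h1 : ‖(K₁ w)‖ = ‖(G w)‖ / ‖w‖ := by
        simp [hK₁def, hw0, norm_div]
      rw [h1, div_le_iff₀ hwpos, mul_comm]
      rw [mul_comm]
      exact hGbound w hw
  have had : ‖a‖ ≤ d := by
    simpa [hK₁0] using hK₁bound 0 (by simpa using hR0)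
  -- second coefficient
  set b : ℂ := deriv K₁ 0 with hbdef
  have hbDeriv : HasDerivAt K₁ b 0 := hK₁analytic.differentiableAt.hasDerivAt
  have hbbound : ‖b‖ ≤ 2 * d ^ 2 := by
    refine le_of_forall_pos_le_add' fun ε hε => ?_
    set ε' : ℝ := ε * d⁻¹ with hε'def
    have hε' : 0 < ε' := by positivity
    have hmaps : Set.MapsTo K₁ (Metric.ball 0 R) (Metric.ball (K₁ 0) (2 * d + ε')) := by
      intro x hx
      rw [Metric.mem_ball, dist_zero_right] at hx
      rw [hK₁0, Metric.mem_ball, dist_eq_norm]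
      calc ‖(K₁ x - a)‖ ≤ ‖(K₁ x)‖ + ‖a‖ :=
            norm_sub_le _ _
      _ ≤ d + d := add_le_add (hK₁bound x hx) had
      _ < 2 * d + ε' := by linarith
    have h := Complex.norm_deriv_le_div_of_mapsTo_ball hK₁diff (hmaps.mono_right ball_subset_closedBall) hR0
    rw [← hbdef] at h
    have hRd : (2 * d + ε') / R = 2 * d ^ 2 + ε := by
      rw [hε'def, hR, div_inv_eq_mul, add_mul, mul_assoc ε, inv_mul_cancel₀ hd.ne']; ring
    rw [hRd] at h
    exact h
  -- the limit defining b
  have hbig : ∀ᶠ z : ℂ in cocompact ℂ, ‖c‖ < ‖z‖ := by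
    rw [← Metric.cobounded_eq_cocompact]
    have := eventually_cobounded_le_norm (E := ℂ) (‖c‖ + 1)
    filter_upwards [this] with z hz
    linarith
  have hφ : Tendsto (fun z : ℂ => (z - c)⁻¹) (cocompact ℂ) (nhdsWithin 0 {0}ᶜ) := by
    rw [← Metric.cobounded_eq_cocompact]
    exact tendsto_inv₀_cobounded'.comp (Stmt12Aux.tendsto_sub_const_cobounded c)
  have hslopeb : Tendsto (fun z : ℂ => (z - c) * ((z - c) * g z - a)) (cocompact ℂ)
      (nhds b) := by
    have h1 : Tendsto (slope K₁ 0) (nhdsWithin 0 {0}ᶜ) (nhds b) :=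
      hasDerivAt_iff_tendsto_slope.1 hbDeriv
    have h2 : Tendsto (fun z : ℂ => slope K₁ 0 ((z - c)⁻¹)) (cocompact ℂ) (nhds b) :=
      h1.comp hφ
    refine Tendsto.congr' ?_ h2
    filter_upwards [hbig] with z hz
    have hzc : z - c ≠ 0 := by
      intro h
      rw [sub_eq_zero] at h
      subst h
      exact lt_irrefl _ hz
    have hzi : (z - c)⁻¹ ≠ 0 := inv_ne_zero hzc
    rw [slope_def_field]
    rw [hK₁0]
    have hK₁v : K₁ ((z - c)⁻¹) = g z * (z - c) := by
      simp only [hK₁def, hGdef, hzi, if_neg]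
      rw [inv_inv, add_sub_cancel]
      field_simp
      simp [mul_comm]
    rw [hK₁v]
    field_simp
    ring
  -- choice of δ
  have hUcne : Uᶜ.Nonempty := by
    refine ⟨c + ((2 * d : ℝ) : ℂ), fun hmem => ?_⟩
    have h1 : (c + ((2 * d : ℝ) : ℂ)) ∈ closedSquare c d := interior_subset hmem.1
    obtain ⟨h2, -⟩ := h1
    have h3 : (c + ((2 * d : ℝ) : ℂ)).re - c.re = 2 * d := by
      simp [Complex.add_re, Complex.ofReal_re]
    rw [h3] at h2
    rw [abs_of_nonneg (by positivity)] at h2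
    linarith
  obtain ⟨y₀, hy₀F, hy₀min⟩ := hFc.exists_isMinOn hFne ((continuous_infDist_pt Uᶜ).continuousOn)
  set m : ℝ := infDist y₀ Uᶜ with hm
  have hm0 : 0 < m := by
    rw [hm]
    exact (hUopen.isClosed_compl.notMem_iff_infDist_pos hUcne).1
      (fun h => h (hFU hy₀F))
  set δ : ℝ := m / 2 with hδdef
  have hδ : 0 < δ := by positivity
  set E : Set ℂ := {z : ℂ | infDist z F ≤ δ} with hE
  have hEclosed : IsClosed E := isClosed_le (continuous_infDist_pt F) continuous_const
  have hEcompact : IsCompact E := by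
    refine (isCompact_closedBall c (δ + 2 * d)).of_isClosed_subset hEclosed ?_
    intro z hz
    obtain ⟨y, hyF, hy⟩ := hFc.exists_infDist_eq_dist hFne z
    have h1 : dist z y ≤ δ := by rw [← hy]; exact hz
    have h2 : dist y c ≤ d := hFball hyF
    rw [mem_closedBall]
    calc dist z c ≤ dist z y + dist y c := dist_triangle _ _ _
    _ ≤ δ + d := add_le_add h1 h2
    _ ≤ δ + 2 * d := by linarith
  have hEsubU : E ⊆ U := by
    intro z hz
    by_contra hzU
    obtain ⟨y, hyF, hy⟩ := hFc.exists_infDist_eq_dist hFne z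
    have h1 : dist z y ≤ δ := by rw [← hy]; exact hz
    have h2 : infDist y Uᶜ ≤ dist y z := infDist_le_dist_of_mem hzU
    rw [dist_comm] at h2
    have h3 : m ≤ infDist y Uᶜ := hy₀min hyF
    rw [hδdef] at h1
    linarith
  have hFsub : ∀ z : ℂ, δ / 2 < infDist z F → z ∉ F := by
    intro z hzd hzF
    rw [infDist_zero_of_mem hzF] at hzd
    linarith
  -- cutoff function
  set χ : ℂ → ℝ := fun z => max 0 (min 1 ((infDist z F - δ / 2) / (δ / 2))) with hχdef
  have hχcont : Continuous χ :=
    continuous_const.max (continuous_const.min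
      (((continuous_infDist_pt F).sub continuous_const).div_const _))
  have hχ0 : ∀ z : ℂ, infDist z F ≤ δ / 2 → χ z = 0 := by
    intro z hz
    have h1 : (infDist z F - δ / 2) / (δ / 2) ≤ 0 := by
      apply div_nonpos_of_nonpos_of_nonneg <;> linarith
    have h2 : min 1 ((infDist z F - δ / 2) / (δ / 2)) ≤ 0 := le_trans (min_le_right _ _) h1
    simp [hχdef, max_eq_left h2]
  have hχ1 : ∀ z : ℂ, δ ≤ infDist z F → χ z = 1 := by
    intro z hz
    have h1 : (1 : ℝ) ≤ (infDist z F - δ / 2) / (δ / 2) := by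
      rw [le_div_iff₀ (by linarith)]
      linarith
    simp [hχdef, min_eq_left h1]
  have hχ01 : ∀ z : ℂ, 0 ≤ χ z ∧ χ z ≤ 1 := by
    intro z
    refine ⟨le_max_left _ _, max_le (by norm_num) (min_le_left _ _)⟩
  -- main function
  set lam : ℂ := α * d / a with hlamdef
  set mu : ℂ := (β * d ^ 2 - lam * b) / a ^ 2 with hmudef
  set f : ℂ → ℂ := fun z => lam * g z + mu * (g z) ^ 2 with hfdef
  set fχ : ℂ → ℂ := fun z => (χ z : ℂ) * f z with hfχdef
  have hlam_a : lam * a = α * d := by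
    rw [hlamdef]; field_simp
  have hmu_a : mu * a ^ 2 = β * d ^ 2 - lam * b := by
    rw [hmudef]; field_simp
  -- bound on coefficients
  have hαd : ‖(α * (d : ℂ))‖ ≤ d := by
    rw [norm_mul]
    have : ‖(d : ℂ)‖ = d := by
      rw [Complex.norm_real, Real.norm_eq_abs, abs_of_pos hd]
    rw [this]
    nlinarith
  have hβd : ‖(β * (d : ℂ) ^ 2)‖ ≤ d ^ 2 := by
    rw [norm_mul, norm_pow]
    have : ‖(d : ℂ)‖ = d := by
      rw [Complex.norm_real, Real.norm_eq_abs, abs_of_pos hd]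
    rw [this]
    nlinarith [sq_nonneg d]
  have hlam_bound : ‖lam‖ ≤ d / ‖a‖ := by
    rw [hlamdef, norm_div]
    exact div_le_div_of_nonneg_right hαd ha0.le
  have hmu_bound : ‖mu‖ ≤ (d ^ 2 + (d / ‖a‖) * (2 * d ^ 2)) /
      ‖a‖ ^ 2 := by
    rw [hmudef, norm_div, norm_pow]
    apply div_le_div_of_nonneg_right _ (by positivity)
    calc ‖(β * d ^ 2 - lam * b)‖
        ≤ ‖(β * (d : ℂ) ^ 2)‖ + ‖(lam * b)‖ :=
          norm_sub_le _ _
    _ ≤ d ^ 2 + (d / ‖a‖) * (2 * d ^ 2) := by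
        refine add_le_add hβd ?_
        rw [norm_mul]
        exact mul_le_mul hlam_bound hbbound (norm_nonneg b) (by positivity)
  have hM_bound : ‖lam‖ + ‖mu‖ ≤ 54 / ε₁ ^ 3 := by
    set s : ℝ := ‖a‖ with hs
    have hs0 : 0 < s := ha0
    have hsd : s ≤ d := had
    have hse : ε₁ * d / 2 < s := hr
    have hε₁2 : ε₁ < 2 := by
      have h := hse.trans_le hsd
      exact lt_of_mul_lt_mul_right (by linarith : ε₁ * d < 2 * d) hd.le
    have h1 : d / s ≤ 2 / ε₁ := by
      rw [div_le_div_iff₀ hs0 hε₁]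
      linarith
    have h2 : ‖mu‖ ≤ d ^ 2 / s ^ 2 + 2 * d ^ 3 / s ^ 3 := by
      refine hmu_bound.trans_eq ?_
      field_simp
    have hds : 0 ≤ d / s := by positivity
    have h3 : d ^ 2 / s ^ 2 ≤ (2 / ε₁) ^ 2 := by
      rw [← div_pow]
      exact pow_le_pow_left₀ hds h1 2
    have h4 : d ^ 3 / s ^ 3 ≤ (2 / ε₁) ^ 3 := by
      rw [← div_pow]
      exact pow_le_pow_left₀ hds h1 3
    have e3 : 2 / ε₁ ≤ 8 / ε₁ ^ 3 := by
      rw [div_le_div_iff₀ hε₁ (by positivity)]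
      nlinarith [sq_nonneg ε₁, hε₁.le, hε₁2.le, sq_nonneg (ε₁ - 2)]
    have e4 : 4 / ε₁ ^ 2 ≤ 8 / ε₁ ^ 3 := by
      rw [div_le_div_iff₀ (by positivity) (by positivity)]
      nlinarith [sq_nonneg ε₁, hε₁.le, hε₁2.le]
    have e5 : (2 / ε₁) ^ 2 = 4 / ε₁ ^ 2 := by rw [div_pow]; norm_num
    have e6 : (2 / ε₁) ^ 3 = 8 / ε₁ ^ 3 := by rw [div_pow]; norm_num
    calc ‖lam‖ + ‖mu‖
        ≤ d / s + (d ^ 2 / s ^ 2 + 2 * d ^ 3 / s ^ 3) := add_le_add hlam_bound h2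
    _ ≤ 2 / ε₁ + ((2 / ε₁) ^ 2 + 2 * (2 / ε₁) ^ 3) := by
        refine add_le_add h1 (add_le_add h3 ?_)
        rw [mul_div_assoc]
        linarith
    _ = 2 / ε₁ + 4 / ε₁ ^ 2 + 16 / ε₁ ^ 3 := by rw [e5, e6]; ring
    _ ≤ 8 / ε₁ ^ 3 + 8 / ε₁ ^ 3 + 16 / ε₁ ^ 3 := by linarith
    _ = 32 / ε₁ ^ 3 := by ring
    _ ≤ 54 / ε₁ ^ 3 := by
        gcongr
        norm_num
  -- pointwise bound
  have hf_bound : ∀ z : ℂ, z ∉ F → ‖(f z)‖ ≤ ‖lam‖ + ‖mu‖ := by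
    intro z hz
    have hg1 : ‖(g z)‖ ≤ 1 := hgb z hz
    calc ‖(f z)‖ ≤ ‖(lam * g z)‖ + ‖(mu * g z ^ 2)‖ :=
          norm_add_le _ _
    _ = ‖lam‖ * ‖(g z)‖ + ‖mu‖ * ‖(g z)‖ ^ 2 := by
        rw [norm_mul, norm_mul, norm_pow]
    _ ≤ ‖lam‖ * 1 + ‖mu‖ * 1 := by
        refine add_le_add (mul_le_mul_of_nonneg_left hg1 (by positivity)) ?_
        refine mul_le_mul_of_nonneg_left ?_ (by positivity)
        nlinarith [norm_nonneg (g z)]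
    _ = ‖lam‖ + ‖mu‖ := by ring
  -- continuity
  have hgcont : ∀ z : ℂ, z ∉ F → ContinuousAt g z :=
    fun z hz => (hgd.differentiableAt (hFopen.mem_nhds hz)).continuousAt
  have hfcont : ∀ z : ℂ, z ∉ F → ContinuousAt f z := by
    intro z hz
    exact (continuousAt_const.mul (hgcont z hz)).add
      (continuousAt_const.mul ((hgcont z hz).pow 2))
  have hfχcont : Continuous fχ := by
    rw [continuous_iff_continuousAt]
    intro z
    rcases lt_or_ge (infDist z F) (δ / 2) with hz | hz
    · have hopen : IsOpen {w : ℂ | infDist w F < δ / 2} :=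
        isOpen_lt (continuous_infDist_pt F) continuous_const
      have hev : fχ =ᶠ[nhds z] fun _ => 0 := by
        filter_upwards [hopen.mem_nhds hz] with w hw
        simp [hfχdef, hχ0 w (le_of_lt hw)]
      exact ContinuousAt.congr continuousAt_const (Filter.EventuallyEq.symm hev)
    · have hzF : z ∉ F := by
        intro hzF
        rw [infDist_zero_of_mem hzF] at hz
        linarith
      exact ((Complex.continuous_ofReal.comp hχcont).continuousAt).mul (hfcont z hzF)
  -- eventual equality
  have hEmem : Eᶜ ∈ cocompact ℂ := hEcompact.compl_mem_cocompact
  have hfχeq : fχ =ᶠ[cocompact ℂ] f := by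
    filter_upwards [hEmem] with z hz
    have : δ < infDist z F := lt_of_not_ge hz
    rw [hfχdef]
    simp [hχ1 z (le_of_lt this)]
  refine ⟨fχ, hfχcont, ?_, ⟨E, hEcompact, hEsubU, ?_⟩, ?_, ?_, ?_⟩
  · -- global bound
    intro z
    rcases le_or_gt (infDist z F) (δ / 2) with hz | hz
    · rw [hfχdef]
      simp only [hχ0 z hz]
      simp
      positivity
    · have hzF : z ∉ F := hFsub z hz
      have h1 : ‖((χ z : ℂ))‖ ≤ 1 := by
        rw [Complex.norm_real, Real.norm_eq_abs, abs_of_nonneg (hχ01 z).1]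
        exact (hχ01 z).2
      calc ‖(fχ z)‖ = ‖((χ z : ℂ))‖ * ‖(f z)‖ := norm_mul _ _
      _ ≤ 1 * (‖lam‖ + ‖mu‖) := by
          refine mul_le_mul h1 (hf_bound z hzF) (by positivity) (by norm_num)
      _ = ‖lam‖ + ‖mu‖ := one_mul _
      _ ≤ 54 / ε₁ ^ 3 := hM_bound
  · -- differentiability off E
    intro z hz
    have hzE : δ < infDist z F := lt_of_not_ge hz
    have hEopen : IsOpen Eᶜ := hEclosed.isOpen_compl
    have hzF : z ∉ F := hFsub z (by linarith)
    have hfdiff : DifferentiableAt ℂ f z := by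
      have hgdz := hgd.differentiableAt (hFopen.mem_nhds hzF)
      exact (hgdz.const_mul lam).add ((hgdz.pow 2).const_mul mu)
    have hev : fχ =ᶠ[nhds z] f := by
      filter_upwards [hEopen.mem_nhds hz] with w hw
      have : δ < infDist w F := lt_of_not_ge hw
      simp [hfχdef, hχ1 w (le_of_lt this)]
    exact (hev.differentiableAt_iff.2 hfdiff).differentiableWithinAt
  · -- tendsto 0
    have hf0 : Tendsto f (cocompact ℂ) (nhds 0) := by
      have h1 : Tendsto (fun z => lam * g z) (cocompact ℂ) (nhds (lam * 0)) :=
        hg0.const_mul lam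
      have h2 : Tendsto (fun z => mu * g z ^ 2) (cocompact ℂ) (nhds (mu * 0 ^ 2)) :=
        (hg0.pow 2).const_mul mu
      have := h1.add h2
      simpa using this
    exact hf0.congr' hfχeq.symm
  · -- first limit
    have h1 : Tendsto (fun z => z * f z) (cocompact ℂ) (nhds (α * d)) := by
      have ha1 : Tendsto (fun z => lam * (z * g z)) (cocompact ℂ) (nhds (lam * a)) :=
        hga.const_mul lam
      have ha2 : Tendsto (fun z => mu * (z * g z * g z)) (cocompact ℂ)
          (nhds (mu * (a * 0))) := (hga.mul hg0).const_mul mu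
      have := ha1.add ha2
      rw [hlam_a, mul_zero, mul_zero, add_zero] at this
      refine this.congr fun z => by ring
    refine h1.congr' ?_
    filter_upwards [hfχeq] with z hz
    rw [hz]
  · -- second limit
    have h1 : Tendsto (fun z : ℂ => lam * ((z - c) * ((z - c) * g z - a)) +
        mu * ((z - c) * g z) ^ 2) (cocompact ℂ) (nhds (lam * b + mu * a ^ 2)) := by
      exact (hslopeb.const_mul lam).add (((hzgc.pow 2).const_mul mu))
    have hval : lam * b + mu * a ^ 2 = β * d ^ 2 := by
      rw [hmu_a]; ring
    rw [hval] at h1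
    refine h1.congr' ?_
    filter_upwards [hfχeq] with z hz
    rw [hz, hfdef]
    simp only
    rw [← hlam_a]
    ring
  done
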